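/- Let θ ≥ p > 1 and let t₀ := √(pθ(p+1)/(θ+1)) + √(pθ(p+1)/(θ+1) − √(pθ(p+1)/(θ+1))). Then 2t₀(θ+1)/(pθ−1) > 4. -/

import Mathlib

private lemma aux1 (p θ : ℝ) (hp : 1 < p) (hpθ : p ≤ θ)
    (hM : p*θ*(p+1)*(θ+1) ≤ 4*(p*θ-1)^2) : 4 ≤ p*θ := by
  by_contra h
  push_neg at h
  have hθ : 1 < θ := lt_of_lt_of_le hp hpθ
  have hx : 1 < p*θ := by nlinarith
  have hw : 0 < p + θ := by linarith
  have hG : 0 ≤ 4*(p*θ-1)^2 - p*θ*(p+1)*(θ+1) := by linarith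
  have hid : p*θ*(p+θ) = (3*(p*θ)^2 - 9*(p*θ) + 4) - (4*(p*θ-1)^2 - p*θ*(p+1)*(θ+1)) := by ring
  have hsq : (p*θ*(p+θ))^2 = 4*(p*θ)^3 + (p*θ)^2*(p-θ)^2 := by ring
  have hkey : 0 < (p*θ-1)^2*(4-p*θ)*(9*(p*θ)-4) := by
    apply mul_pos (mul_pos (pow_pos (by linarith : (0:ℝ) < p*θ-1) 2) (by linarith)) (by nlinarith)
  have hkid : 4*(p*θ)^3 - (3*(p*θ)^2 - 9*(p*θ) + 4)^2 = (p*θ-1)^2*(4-p*θ)*(9*(p*θ)-4) := by ring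
  have hxw : 0 < p*θ*(p+θ) := by positivity
  nlinarith [hsq, hid, hG, hkey, hkid, sq_nonneg (p*θ*(p+θ)), mul_nonneg hG (le_of_lt hxw), mul_nonneg hG hG]

private lemma poly2 (x θ : ℝ) (h1 : 1 < θ) (hb : θ < x) (hg1 : x ≤ θ^2) (hx4 : 4 ≤ x)
    (hd : 0 < 2*x - θ - 3)
    (hg2 : x*(x+θ)*(θ+1) ≤ 4*(x-1)^2*θ) :
    16*(x-1)^4*θ < x*(x+θ)*(θ+1)*(4*x-θ-5)^2 := by
  have A1 : (0:ℝ) ≤ θ - 1 := by linarith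
  have A2 : (0:ℝ) ≤ x - θ := by linarith
  have A3 : (0:ℝ) ≤ θ^2 - x := by linarith
  have A4 : (0:ℝ) ≤ 4*(x-1)^2*θ - x*(x+θ)*(θ+1) := by linarith
  have A5 : (0:ℝ) < 4*x-θ-5 := by linarith
  have A6 : (0:ℝ) < x - 1 := by linarith
  nlinarith [mul_nonneg A4 A1, mul_nonneg A4 A2, mul_nonneg A4 A3, mul_nonneg (mul_nonneg A4 A1) A2, mul_nonneg (mul_nonneg A4 A1) A1, mul_nonneg (mul_nonneg A4 A2) A2, mul_nonneg A4 A5.le, mul_nonneg A4 hd.le, mul_nonneg (mul_nonneg A3 A1) A1, mul_nonneg (mul_nonneg A3 A2) A2, mul_pos A5 A6, mul_pos hd A6, mul_nonneg A3 A2, mul_nonneg A3 A1, mul_nonneg A2 A1]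

set_option maxHeartbeats 1000000 in
/-- for `θ ≥ p > 1`, `2t₀(θ+1)/(pθ−1) > 4`. -/
theorem stmt15 (p θ t₀ : ℝ) (hp : 1 < p) (hpθ : p ≤ θ)
    (ht₀ : t₀ = Real.sqrt (p * θ * (p + 1) / (θ + 1)) +
      Real.sqrt (p * θ * (p + 1) / (θ + 1) - Real.sqrt (p * θ * (p + 1) / (θ + 1)))) :
    2 * t₀ * (θ + 1) / (p * θ - 1) > 4 := by
  have hθ : 1 < θ := lt_of_lt_of_le hp hpθ
  have hv : (0:ℝ) < θ + 1 := by linarith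
  have hq : (0:ℝ) < p*θ - 1 := by nlinarith
  set A : ℝ := p * θ * (p + 1) / (θ + 1) with hAdef
  set s : ℝ := Real.sqrt A with hsdef
  set r : ℝ := Real.sqrt (A - s) with hrdef
  have hA1 : 1 < A := by
    rw [hAdef, lt_div_iff₀ hv]
    nlinarith
  have hA0 : (0:ℝ) ≤ A := by linarith
  have hs2 : s^2 = A := Real.sq_sqrt hA0
  have hs1 : 1 < s := by
    nlinarith [hs2, Real.sqrt_nonneg A]
  have hAs : 0 ≤ A - s := by nlinarith
  have hr2 : r^2 = A - s := Real.sq_sqrt hAs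
  have hr0 : 0 ≤ r := Real.sqrt_nonneg _
  have hsv : s^2 * (θ+1) = p*θ*(p+1) := by
    rw [hs2, hAdef]; field_simp
  -- goal reduction
  rw [gt_iff_lt, lt_div_iff₀ hq, ht₀]
  -- suffices : (θ+1)*(s+r) > 2*(p*θ-1)
  rcases lt_or_ge (2*(p*θ-1)) (s*(θ+1)) with hY | hY
  · nlinarith [mul_nonneg hr0 hv.le]
  · -- hard case
    have hT0 : 0 < s*(θ+1) := by positivity
    have hMle : p*θ*(p+1)*(θ+1) ≤ 4*(p*θ-1)^2 := by
      nlinarith [mul_self_nonneg (s*(θ+1))]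
    have hx4 : 4 ≤ p*θ := aux1 p θ hp hpθ hMle
    have hd : 0 < 2*(p*θ) - θ - 3 := by nlinarith
    have hc : 0 < 4*(p*θ) - θ - 5 := by nlinarith
    have hpoly : 16*(p*θ-1)^4*θ < (p*θ)*((p*θ)+θ)*(θ+1)*(4*(p*θ)-θ-5)^2 := by
      have := poly2 (p*θ) θ hθ (by nlinarith) (by nlinarith) hx4 hd (by nlinarith)
      linarith
    have hMc : 16*(p*θ-1)^4 < (p*θ*(p+1)*(θ+1))*(4*(p*θ)-θ-5)^2 := by
      have hθ0 : (0:ℝ) < θ := by linarith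
      have h1 : (p*θ)*((p*θ)+θ)*(θ+1)*(4*(p*θ)-θ-5)^2 = (p*θ*(p+1)*(θ+1))*(4*(p*θ)-θ-5)^2*θ := by ring
      rw [h1] at hpoly
      exact (mul_lt_mul_iff_of_pos_right hθ0).mp hpoly
    -- T*c > 4*q^2
    have hT2 : (s*(θ+1))^2 = p*θ*(p+1)*(θ+1) := by
      have h : (s*(θ+1))^2 = s^2*(θ+1)*(θ+1) := by ring
      rw [h, hsv]
    have h16 : (4*(p*θ-1)^2)^2 < (s*(θ+1)*(4*(p*θ)-θ-5))^2 := by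
      have h : (s*(θ+1)*(4*(p*θ)-θ-5))^2 = (s*(θ+1))^2*(4*(p*θ)-θ-5)^2 := by ring
      rw [h, hT2]
      nlinarith [hMc]
    have hTc : 4*(p*θ-1)^2 < s*(θ+1)*(4*(p*θ)-θ-5) :=
      lt_of_pow_lt_pow_left₀ 2 (by positivity) h16
    -- now r*(θ+1) > 2*(p*θ-1) - s*(θ+1)
    have hrv : (r*(θ+1))^2 = p*θ*(p+1)*(θ+1) - s*(θ+1)^2 := by
      have h : (r*(θ+1))^2 = r^2*(θ+1)^2 := by ring
      rw [h, hr2]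
      nlinarith [hsv]
    have h17 : (2*(p*θ-1) - s*(θ+1))^2 < (r*(θ+1))^2 := by
      nlinarith [hrv, hTc, hT2]
    have hfin : 2*(p*θ-1) - s*(θ+1) < r*(θ+1) :=
      lt_of_pow_lt_pow_left₀ 2 (by positivity) h17
    nlinarith [hfin]
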